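/- A sequence (u_β)_{β<α} in a linear order is densely non-increasing if and only if both of the following hold for all β' < β < α: (i) if β = β'+1 then u_{β'} ≥ u_β; (ii) if β is a limit ordinal and the sequence is constant on the interval [β', β) then u_{β'} ≥ u_β. -/

import Mathlib

/-- The sequence `u` is constant on the interval `[γ, γ')`. -/
def ConstantOn {U : Type*} (u : Ordinal → U) (γ γ' : Ordinal) : Prop :=
  ∀ β, γ ≤ β → β < γ' → u β = u γ

/-- The sequence `u` (restricted below `α`) is densely non-increasing. -/
def DenselyNonIncreasing {U : Type*} [LinearOrder U] (u : Ordinal → U) (α : Ordinal) : Prop :=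
  ∀ γ γ', γ < γ' → γ' ≤ α →
    ConstantOn u γ γ' ∨ ∃ β β', γ ≤ β ∧ β < β' ∧ β' < γ' ∧ u β' < u β

theorem denselyNonIncreasing_iff {U : Type*} [LinearOrder U]
    (u : Ordinal → U) (α : Ordinal) :
    DenselyNonIncreasing u α ↔
      ∀ β' β : Ordinal, β' < β → β < α →
        ((β = β' + 1 → u β ≤ u β') ∧
         (Order.IsSuccLimit β → ConstantOn u β' β → u β ≤ u β')) := by
  constructor
  · intro hD β' β hlt hβα
    have hsle : β + 1 ≤ α := by
      rw [Ordinal.add_one_eq_succ, Order.succ_le_iff]; exact hβα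
    constructor
    · intro hβ
      by_contra h
      push_neg at h
      rcases hD β' (β + 1) (hlt.trans (Order.lt_succ β)) hsle with hc | ⟨β₁, β₂, h1, h2, h3, h4⟩
      · have := hc β hlt.le (Order.lt_succ β)
        rw [this] at h; exact lt_irrefl _ h
      · have hβ₂ : β₂ ≤ β := by
          rw [Ordinal.add_one_eq_succ] at h3; exact Order.lt_succ_iff.mp h3
        have hβ₁ : β₁ ≤ β' := by
          have : β₁ < β' + 1 := lt_of_lt_of_le h2 (hβ ▸ hβ₂)
          rw [Ordinal.add_one_eq_succ] at this; exact Order.lt_succ_iff.mp this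
        have hβ₁' : β₁ = β' := le_antisymm hβ₁ h1
        have hβ₂' : β₂ = β := by
          apply le_antisymm hβ₂
          rw [hβ]
          rw [Ordinal.add_one_eq_succ, Order.succ_le_iff]
          exact hβ₁' ▸ h2
        rw [hβ₁', hβ₂'] at h4
        exact absurd h4 (not_lt_of_gt h)
    · intro hβlim hconst
      by_contra h
      push_neg at h
      rcases hD β' (β + 1) (hlt.trans (Order.lt_succ β)) hsle with hc | ⟨β₁, β₂, h1, h2, h3, h4⟩
      · have := hc β hlt.le (Order.lt_succ β)
        rw [this] at h; exact lt_irrefl _ h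
      · have hβ₂ : β₂ ≤ β := by
          rw [Ordinal.add_one_eq_succ] at h3; exact Order.lt_succ_iff.mp h3
        rcases lt_or_eq_of_le hβ₂ with hβ₂ | hβ₂
        · have e1 := hconst β₁ h1 (h2.trans hβ₂)
          have e2 := hconst β₂ (h1.trans h2.le) hβ₂
          rw [e1, e2] at h4; exact lt_irrefl _ h4
        · have e1 := hconst β₁ h1 (hβ₂ ▸ h2)
          rw [e1, hβ₂] at h4
          exact absurd h4 (not_lt_of_gt h)
  · intro H γ γ' hlt hle
    by_cases hc : ConstantOn u γ γ'
    · exact Or.inl hc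
    · right
      simp only [ConstantOn, not_forall] at hc
      obtain ⟨δ, hδ1, hδ2, hδ3⟩ := hc
      set S : Set Ordinal := {β | γ ≤ β ∧ β < γ' ∧ u β ≠ u γ} with hS
      have hne : S.Nonempty := ⟨δ, hδ1, hδ2, hδ3⟩
      set β := Ordinal.lt_wf.min S hne with hβdef
      obtain ⟨hβ1, hβ2, hβ3⟩ : β ∈ S := Ordinal.lt_wf.min_mem S hne
      have hmin : ∀ x ∈ S, ¬ x < β := fun x hx => Ordinal.lt_wf.not_lt_min S hx
      have hconst : ConstantOn u γ β := by
        intro x hx1 hx2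
        by_contra hne'
        exact hmin x ⟨hx1, hx2.trans hβ2, hne'⟩ hx2
      have hγβ : γ < β := by
        rcases lt_or_eq_of_le hβ1 with h | h
        · exact h
        · exact absurd (h ▸ rfl) hβ3
      have hβα : β < α := hβ2.trans_le hle
      rcases Ordinal.zero_or_succ_or_isSuccLimit β with h0 | ⟨a, ha⟩ | hlim
      · exact absurd (h0 ▸ hγβ) (not_lt_zero (a := γ))
      · have ha' : β = a + 1 := by rw [← ha, Ordinal.add_one_eq_succ]
        have haβ : a < β := by rw [ha']; exact Order.lt_succ a
        have hγa : γ ≤ a := by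
          have := ha' ▸ hγβ
          rw [Ordinal.add_one_eq_succ] at this; exact Order.lt_succ_iff.mp this
        have hua : u a = u γ := hconst a hγa haβ
        have := (H a β haβ hβα).1 ha'
        refine ⟨a, β, hγa, haβ, hβ2, ?_⟩
        rcases lt_or_eq_of_le this with h | h
        · exact h
        · rw [h, hua] at hβ3; exact absurd rfl hβ3
      · have hconst' : ConstantOn u γ β := hconst
        have := (H γ β hγβ hβα).2 hlim (by
          intro x hx1 hx2
          exact hconst x hx1 hx2)
        refine ⟨γ, β, le_refl γ, hγβ, hβ2, ?_⟩
        rcases lt_or_eq_of_le this with h | h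
        · exact h
        · rw [h] at hβ3; exact absurd rfl hβ3
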